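/- Fix n ≥ 2. For every real r with 1/3 < r < 1 there exist A ∈ M_n(ℂ) with Tr(A) a nonnegative real number, a Hermitian S ∈ M_n(ℂ) with Re(A) ≤ S, and B ∈ M_n(ℂ) with Tr(S B) = 0, Tr(A B) = 0, and ‖B‖ ≤ 1, such that Tr(A) + ∑_{m=1}^∞ |Tr(A B*)| r^m > Tr(S). (For n = 2 one may take S = I_2, A with rows (1/2 + ik, 1/2), (1/2, 1/2 − ik), and B with rows (−θ/(2k), iθ), (iθ, θ/(2k)), where (1−r)/(2r) < θ < 1 and the integer k satisfies k > θ/(2(1−θ)); for n ≥ 3 pad these matrices with rows and columns of zeros.) -/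

import Mathlib

open Matrix
open scoped Matrix.Norms.L2Operator ComplexOrder

namespace BohrAux

noncomputable section

variable {n : ℕ}

def pE (h : 2 ≤ n) : Fin n ≃ Fin 2 ⊕ Fin (n - 2) :=
  (finCongr (by omega)).trans finSumFinEquiv.symm

def emb0 (h : 2 ≤ n) (M : Matrix (Fin 2) (Fin 2) ℂ) : Matrix (Fin n) (Fin n) ℂ :=
  (fromBlocks M 0 0 0).submatrix (pE h) (pE h)

def emb1 (h : 2 ≤ n) (M : Matrix (Fin 2) (Fin 2) ℂ) : Matrix (Fin n) (Fin n) ℂ :=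
  (fromBlocks M 0 0 1).submatrix (pE h) (pE h)

lemma emb0_mul (h : 2 ≤ n) (M N : Matrix (Fin 2) (Fin 2) ℂ) :
    emb0 h M * emb0 h N = emb0 h (M * N) := by
  unfold emb0
  rw [submatrix_mul_equiv, fromBlocks_multiply]
  simp

lemma emb1_mul (h : 2 ≤ n) (M N : Matrix (Fin 2) (Fin 2) ℂ) :
    emb1 h M * emb1 h N = emb1 h (M * N) := by
  unfold emb1
  rw [submatrix_mul_equiv, fromBlocks_multiply]
  simp

lemma emb0_conjT (h : 2 ≤ n) (M : Matrix (Fin 2) (Fin 2) ℂ) :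
    (emb0 h M)ᴴ = emb0 h Mᴴ := by
  unfold emb0
  rw [conjTranspose_submatrix, fromBlocks_conjTranspose]
  simp

lemma emb1_conjT (h : 2 ≤ n) (M : Matrix (Fin 2) (Fin 2) ℂ) :
    (emb1 h M)ᴴ = emb1 h Mᴴ := by
  unfold emb1
  rw [conjTranspose_submatrix, fromBlocks_conjTranspose]
  simp

lemma emb1_one (h : 2 ≤ n) : emb1 h (1 : Matrix (Fin 2) (Fin 2) ℂ) = 1 := by
  unfold emb1
  rw [fromBlocks_one, submatrix_one_equiv]

lemma emb0_sub (h : 2 ≤ n) (M N : Matrix (Fin 2) (Fin 2) ℂ) :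
    emb0 h M - emb0 h N = emb0 h (M - N) := by
  ext i j
  simp only [emb0, submatrix_apply, Matrix.sub_apply]
  cases h1 : pE h i <;> cases h2 : pE h j <;> simp [fromBlocks]

lemma emb0_add (h : 2 ≤ n) (M N : Matrix (Fin 2) (Fin 2) ℂ) :
    emb0 h M + emb0 h N = emb0 h (M + N) := by
  ext i j
  simp only [emb0, submatrix_apply, Matrix.add_apply]
  cases h1 : pE h i <;> cases h2 : pE h j <;> simp [fromBlocks]

lemma emb0_smul (h : 2 ≤ n) (c : ℂ) (M : Matrix (Fin 2) (Fin 2) ℂ) :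
    c • emb0 h M = emb0 h (c • M) := by
  ext i j
  simp only [emb0, submatrix_apply, Matrix.smul_apply]
  cases h1 : pE h i <;> cases h2 : pE h j <;> simp [fromBlocks]

lemma one_sub_emb0 (h : 2 ≤ n) (M : Matrix (Fin 2) (Fin 2) ℂ) :
    1 - emb0 h M = emb1 h (1 - M) := by
  have h1 : (1 : Matrix (Fin n) (Fin n) ℂ) = emb1 h 1 := (emb1_one h).symm
  rw [h1]
  ext i j
  simp only [emb0, emb1, submatrix_apply, Matrix.sub_apply]
  cases h1 : pE h i <;> cases h2 : pE h j <;> simp [fromBlocks]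

lemma emb0_trace (h : 2 ≤ n) (M : Matrix (Fin 2) (Fin 2) ℂ) :
    (emb0 h M).trace = M.trace := by
  unfold emb0
  have h1 : ((fromBlocks M 0 0 (0 : Matrix (Fin (n - 2)) (Fin (n - 2)) ℂ)).submatrix
      (pE h) (pE h)).trace = (fromBlocks M 0 0 (0 : Matrix (Fin (n - 2)) (Fin (n - 2)) ℂ)).trace :=
    Fintype.sum_equiv (pE h) _ _ fun i => rfl
  rw [h1, Matrix.trace, Matrix.trace]
  rw [Fintype.sum_sum_type]
  simp [Matrix.diag]

/-- If `1 - Bᴴ * B` factors as `Xᴴ * X` then `‖B‖ ≤ 1` in the `L2` operator norm. -/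
lemma norm_le_one_of_decomp {m : ℕ} (B X : Matrix (Fin m) (Fin m) ℂ)
    (h : 1 - Bᴴ * B = Xᴴ * X) : ‖B‖ ≤ 1 := by
  have hpsd : (1 - Bᴴ * B).PosSemidef := h ▸ posSemidef_conjTranspose_mul_self X
  rw [Matrix.l2_opNorm_def]
  refine ContinuousLinearMap.opNorm_le_bound _ zero_le_one fun x => ?_
  rw [one_mul]
  set v : Fin m → ℂ := (WithLp.equiv 2 (Fin m → ℂ)) x with hv
  have key : ∀ w : Fin m → ℂ, (star w ⬝ᵥ w).re = ∑ i, ‖w i‖ ^ 2 := by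
    intro w
    rw [dotProduct, Complex.re_sum]
    refine Finset.sum_congr rfl fun i _ => ?_
    simp only [Pi.star_apply, RCLike.star_def]
    rw [mul_comm, Complex.mul_conj]
    rw [Complex.normSq_eq_norm_sq, Complex.ofReal_re]
  have h0 := hpsd.dotProduct_mulVec_nonneg v
  have expand : star v ⬝ᵥ ((1 - Bᴴ * B) *ᵥ v)
      = star v ⬝ᵥ v - star (B *ᵥ v) ⬝ᵥ (B *ᵥ v) := by
    rw [sub_mulVec, dotProduct_sub, one_mulVec, ← mulVec_mulVec, dotProduct_mulVec,
      ← star_mulVec]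
  rw [expand] at h0
  have hre := (Complex.le_def.mp h0).1
  rw [Complex.zero_re, Complex.sub_re, key, key] at hre
  have hsum : ∑ i, ‖(B *ᵥ v) i‖ ^ 2 ≤ ∑ i, ‖v i‖ ^ 2 := by linarith
  have hBx : ((LinearEquiv.trans (toEuclideanLin (𝕜 := ℂ) (m := Fin m) (n := Fin m))
      LinearMap.toContinuousLinearMap) B) x = (WithLp.equiv 2 (Fin m → ℂ)).symm (B *ᵥ v) := rfl
  rw [hBx]
  rw [EuclideanSpace.norm_eq, EuclideanSpace.norm_eq]
  refine Real.sqrt_le_sqrt ?_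
  exact hsum

end

end BohrAux

open BohrAux

/-- `1/3` is optimal, for every fixed `n ≥ 2`, in the generalized matrix Bohr
inequality with trace-orthogonality conditions. -/
theorem bohr_matrix_trace_orthogonal_optimality (n : ℕ) (hn : 2 ≤ n)
    (r : ℝ) (hr1 : 1 / 3 < r) (hr2 : r < 1) :
    ∃ A S B : Matrix (Fin n) (Fin n) ℂ,
      0 ≤ A.trace ∧
      S.IsHermitian ∧
      (S - (2 : ℂ)⁻¹ • (A + Aᴴ)).PosSemidef ∧
      (S * B).trace = 0 ∧
      (A * B).trace = 0 ∧
      ‖B‖ ≤ 1 ∧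
      A.trace.re + ∑' m : ℕ, ‖(A * Bᴴ).trace‖ * r ^ (m + 1) >
        S.trace.re := by
  have hr0 : (0 : ℝ) < r := by linarith
  obtain ⟨θ, hθgt, hθ1, hθ0⟩ : ∃ θ : ℝ, (1 - r) / (2 * r) < θ ∧ θ < 1 ∧ 0 < θ := by
    refine ⟨((1 - r) / (2 * r) + 1) / 2, ?_, ?_, ?_⟩
    · have : (1 - r) / (2 * r) < 1 := by
        rw [div_lt_one (by positivity)]; linarith
      linarith
    · have : (1 - r) / (2 * r) < 1 := by
        rw [div_lt_one (by positivity)]; linarith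
      linarith
    · have : 0 < (1 - r) / (2 * r) := div_pos (by linarith) (by linarith)
      linarith
  obtain ⟨a, ha, ha0⟩ : ∃ a : ℝ, a = 1 - θ ∧ 0 < a := ⟨1 - θ, rfl, by linarith⟩
  obtain ⟨k, hka⟩ : ∃ k : ℝ, k * a = θ / 2 :=
    ⟨θ / (2 * a), by field_simp⟩
  obtain ⟨s, hs2⟩ : ∃ s : ℝ, s ^ 2 = a * θ :=
    ⟨Real.sqrt (a * θ), Real.sq_sqrt (by positivity)⟩
  -- complex versions of the scalar identities
  have hkaC : (k : ℂ) * (a : ℂ) = (θ : ℂ) / 2 := by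
    rw [← Complex.ofReal_mul, hka]; push_cast; ring
  have haC : (a : ℂ) = 1 - (θ : ℂ) := by rw [ha]; push_cast; ring
  have hsC : (s : ℂ) ^ 2 = (a : ℂ) * (θ : ℂ) := by
    rw [← Complex.ofReal_pow, hs2]; push_cast; ring
  -- the 2×2 matrices
  set A₂ : Matrix (Fin 2) (Fin 2) ℂ :=
    !![1/2 + k * Complex.I, 1/2; 1/2, 1/2 - k * Complex.I] with hA2
  set B₂ : Matrix (Fin 2) (Fin 2) ℂ :=
    !![-(a : ℂ), θ * Complex.I; θ * Complex.I, (a : ℂ)] with hB2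
  set C₂ : Matrix (Fin 2) (Fin 2) ℂ := !![1/2, -(1/2); 1/2, -(1/2)] with hC2
  set D₂ : Matrix (Fin 2) (Fin 2) ℂ :=
    !![(s : ℂ), s * Complex.I; (s : ℂ), s * Complex.I] with hD2
  -- explicit conjugate transposes
  have hA2H : A₂ᴴ = !![1/2 - k * Complex.I, 1/2; 1/2, 1/2 + k * Complex.I] := by
    ext i j
    fin_cases i <;> fin_cases j <;>
      simp [hA2, Matrix.conjTranspose_apply, Complex.ext_iff]
  have hB2H : B₂ᴴ = !![-(a : ℂ), -(θ : ℂ) * Complex.I; -(θ : ℂ) * Complex.I, (a : ℂ)] := by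
    ext i j
    fin_cases i <;> fin_cases j <;>
      simp [hB2, Matrix.conjTranspose_apply, Complex.ext_iff]
  have hC2H : C₂ᴴ = !![1/2, 1/2; -(1/2 : ℂ), -(1/2 : ℂ)] := by
    ext i j
    fin_cases i <;> fin_cases j <;>
      simp [hC2, Matrix.conjTranspose_apply, Complex.ext_iff]
  have hD2H : D₂ᴴ = !![(s : ℂ), (s : ℂ); -(s : ℂ) * Complex.I, -(s : ℂ) * Complex.I] := by
    ext i j
    fin_cases i <;> fin_cases j <;>
      simp [hD2, Matrix.conjTranspose_apply, Complex.ext_iff]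
  have hA2trace : A₂.trace = 1 := by
    simp [hA2, Matrix.trace_fin_two]; ring
  have hB2trace : B₂.trace = 0 := by
    simp [hB2, Matrix.trace_fin_two]
  have hAB2 : (A₂ * B₂).trace = 0 := by
    simp [hA2, hB2, Matrix.trace_fin_two, Matrix.mul_apply, Fin.sum_univ_two]
    linear_combination (-2 * Complex.I) * hkaC
  have hABH2 : (A₂ * B₂ᴴ).trace = (2 * θ : ℝ) * (-Complex.I) := by
    rw [hB2H]
    simp [hA2, Matrix.trace_fin_two, Matrix.mul_apply, Fin.sum_univ_two]
    linear_combination (-2 * Complex.I) * hkaC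
  have hC : (1 : Matrix (Fin 2) (Fin 2) ℂ) - (2 : ℂ)⁻¹ • (A₂ + A₂ᴴ) = C₂ᴴ * C₂ := by
    rw [hA2H, hC2H]
    ext i j
    fin_cases i <;> fin_cases j <;>
      simp [hA2, hC2, Matrix.mul_apply, Fin.sum_univ_two, Matrix.one_apply] <;>
      ring
  have hD : (1 : Matrix (Fin 2) (Fin 2) ℂ) - B₂ᴴ * B₂ = D₂ᴴ * D₂ := by
    rw [hB2H, hD2H]
    ext i j
    fin_cases i <;> fin_cases j
    · simp [hB2, hD2, Matrix.mul_apply, Fin.sum_univ_two, Matrix.one_apply]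
      linear_combination (θ:ℂ)^2 * Complex.I_sq + (-2 : ℂ) * hsC +
        (-(1 + (a : ℂ) + (θ : ℂ))) * haC
    · simp [hB2, hD2, Matrix.mul_apply, Fin.sum_univ_two, Matrix.one_apply]
      linear_combination (-2 * Complex.I) * hsC
    · simp [hB2, hD2, Matrix.mul_apply, Fin.sum_univ_two, Matrix.one_apply]
      linear_combination (2 * Complex.I) * hsC
    · simp [hB2, hD2, Matrix.mul_apply, Fin.sum_univ_two, Matrix.one_apply]
      linear_combination ((θ:ℂ)^2 + 2*(s:ℂ)^2) * Complex.I_sq + (-2 : ℂ) * hsC +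
        (-(1 + (a : ℂ) + (θ : ℂ))) * haC
  refine ⟨emb0 hn A₂, emb0 hn 1, emb0 hn B₂, ?_, ?_, ?_, ?_, ?_, ?_, ?_⟩
  · rw [emb0_trace, hA2trace]; exact zero_le_one
  · show (emb0 hn 1)ᴴ = emb0 hn 1
    rw [emb0_conjT, conjTranspose_one]
  · have key : emb0 hn 1 - (2 : ℂ)⁻¹ • (emb0 hn A₂ + (emb0 hn A₂)ᴴ)
        = (emb0 hn C₂)ᴴ * emb0 hn C₂ := by
      rw [emb0_conjT, emb0_add, emb0_smul, emb0_sub, hC, ← emb0_mul, emb0_conjT]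
    rw [key]
    exact posSemidef_conjTranspose_mul_self _
  · rw [emb0_mul, one_mul, emb0_trace, hB2trace]
  · rw [emb0_mul, emb0_trace, hAB2]
  · apply norm_le_one_of_decomp _ (emb1 hn D₂)
    rw [emb0_conjT, emb0_mul, one_sub_emb0, hD, ← emb1_mul, emb1_conjT]
  · rw [emb0_conjT, emb0_mul, emb0_trace, emb0_trace, hA2trace, hABH2]
    have habs : ‖(((2 * θ : ℝ) : ℂ) * (-Complex.I))‖ = 2 * θ := by
      rw [norm_mul, Complex.norm_real, norm_neg, Complex.norm_I, Real.norm_eq_abs]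
      rw [abs_of_pos (by linarith)]
      ring
    rw [habs]
    have htsum : ∑' m : ℕ, (2 * θ) * r ^ (m + 1) = (2 * θ * r) * (1 - r)⁻¹ := by
      have hterm : ∀ m : ℕ, (2 * θ) * r ^ (m + 1) = (2 * θ * r) * r ^ m := by
        intro m; rw [pow_succ]; ring
      rw [tsum_congr hterm, tsum_mul_left, tsum_geometric_of_lt_one (le_of_lt hr0) hr2]
    rw [htsum]
    have h1r : (0 : ℝ) < 1 - r := by linarith
    have h2 : 1 - r < θ * (2 * r) := (div_lt_iff₀ (by positivity)).mp hθgt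
    have htr : ((1 : Matrix (Fin 2) (Fin 2) ℂ)).trace = 2 := by
      simp [Matrix.trace_fin_two]
    rw [emb0_trace, htr]
    have hfin : (1 : ℝ) < 2 * θ * r * (1 - r)⁻¹ := by
      rw [← div_eq_mul_inv, lt_div_iff₀ h1r]
      nlinarith
    simp only [Complex.one_re]
    norm_num
    linarith
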